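/- arXiv:2001.07803 — 6 statements merged into one kernel-verified Lean document; each statement's English description precedes it below -/
import Mathlib

section
/- In the PPA second-price auction, for every bidder i, bidding β = VPA_i is a weakly dominant strategy: for every profile of nonnegative bids b = (b_1,…,b_n), u_i^PPA(b with the i-th coordinate replaced by VPA_i) ≥ u_i^PPA(b). (Theorem 1, strategy-proofness part.) -/
/-!
STATEMENT 0: In the PPA second-price auction, bidding β = VPA_i is a weakly
dominant strategy for every bidder i.
-/

namespace PPA0

/-- The set of opponents of bidder `i` is nonempty when there are `n ≥ 2` bidders. -/
lemma erase_nonempty {n : ℕ} (hn : 2 ≤ n) (i : Fin n) :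
    ((Finset.univ : Finset (Fin n)).erase i).Nonempty := by
  apply Finset.card_pos.mp
  rw [Finset.card_erase_of_mem (Finset.mem_univ i), Finset.card_univ, Fintype.card_fin]
  omega

/-- `bmax hn b i` is the highest opponent bid `b_{−i}^max = max_{j ≠ i} b_j`. -/
noncomputable def bmax {n : ℕ} (hn : 2 ≤ n) (b : Fin n → ℝ) (i : Fin n) : ℝ :=
  ((Finset.univ : Finset (Fin n)).erase i).sup' (erase_nonempty hn i) b

/-- `T b i = #{j : b_j = b_i}`, the number of bidders tied with bidder `i`. -/
noncomputable def T {n : ℕ} (b : Fin n → ℝ) (i : Fin n) : ℝ :=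
  (Nat.card {j : Fin n // b j = b i} : ℝ)

/-- Value-per-attention: `VPA_i = [x·γ_i + (1−x)·q_i]·v_i`. -/
def VPA {n : ℕ} (x : ℝ) (γ q v : Fin n → ℝ) (i : Fin n) : ℝ :=
  (x * γ i + (1 - x) * q i) * v i

/-- Bidder `i`'s expected payoff in the PPA second-price auction:
`(p·VPA_i − p·b_{−i}^max)/T(b,i)` if `b_i ≥ b_{−i}^max`, and `0` otherwise. -/
noncomputable def uPPA {n : ℕ} (hn : 2 ≤ n) (p x : ℝ) (γ q v : Fin n → ℝ)
    (b : Fin n → ℝ) (i : Fin n) : ℝ :=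
  if bmax hn b i ≤ b i then (p * VPA x γ q v i - p * bmax hn b i) / T b i else 0

lemma bmax_update {n : ℕ} (hn : 2 ≤ n) (b : Fin n → ℝ) (i : Fin n) (β : ℝ) :
    bmax hn (Function.update b i β) i = bmax hn b i := by
  unfold bmax
  apply Finset.sup'_congr _ rfl
  intro j hj
  exact Function.update_of_ne (Finset.ne_of_mem_erase hj) _ _

lemma T_ge_one {n : ℕ} (b : Fin n → ℝ) (i : Fin n) : (1 : ℝ) ≤ T b i := by
  unfold T
  have : 0 < Nat.card {j : Fin n // b j = b i} :=
    @Nat.card_pos _ ⟨⟨i, rfl⟩⟩ _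
  exact_mod_cast this

lemma T_update_eq_one {n : ℕ} (hn : 2 ≤ n) (b : Fin n → ℝ) (i : Fin n) (β : ℝ)
    (h : bmax hn b i < β) : T (Function.update b i β) i = 1 := by
  unfold T
  rw [Function.update_self]
  have key : ∀ j : Fin n, Function.update b i β j = β ↔ j = i := by
    intro j
    constructor
    · intro hj
      by_contra hne
      rw [Function.update_of_ne hne] at hj
      have hle : b j ≤ bmax hn b i :=
        Finset.le_sup' b (Finset.mem_erase.mpr ⟨hne, Finset.mem_univ j⟩)
      linarith
    · rintro rfl; exact Function.update_self _ _ _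
  rw [Nat.card_congr (Equiv.subtypeEquivRight key)]
  simp [Nat.card_eq_fintype_card]

lemma le_bmax {n : ℕ} (hn : 2 ≤ n) (b : Fin n → ℝ) (i j : Fin n) (hj : j ≠ i) :
    b j ≤ bmax hn b i :=
  Finset.le_sup' b (Finset.mem_erase.mpr ⟨hj, Finset.mem_univ j⟩)

/-- **Theorem 1 (strategy-proofness).** In the PPA second-price auction, bidding
`VPA_i` weakly dominates: for every profile of nonnegative bids `b`,
`u_i^PPA(b with i-th coordinate replaced by VPA_i) ≥ u_i^PPA(b)`. -/
theorem ppa_strategyproof (n : ℕ) (hn : 2 ≤ n) (p x : ℝ)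
    (hp : 0 ≤ p ∧ p ≤ 1) (hx : 0 ≤ x ∧ x ≤ 1)
    (γ q v : Fin n → ℝ)
    (hγ : ∀ i, 0 ≤ γ i ∧ γ i ≤ 1) (hq : ∀ i, 0 ≤ q i ∧ q i ≤ 1)
    (hv : ∀ i, 0 ≤ v i)
    (i : Fin n) (b : Fin n → ℝ) (hb : ∀ j, 0 ≤ b j) :
    uPPA hn p x γ q v (Function.update b i (VPA x γ q v i)) i
      ≥ uPPA hn p x γ q v b i := by
  set β := VPA x γ q v i with hβ
  set M := bmax hn b i with hM
  have hT1 : (1:ℝ) ≤ T b i := T_ge_one b i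
  have hT1' : (1:ℝ) ≤ T (Function.update b i β) i := T_ge_one _ i
  have hupd : bmax hn (Function.update b i β) i = M := bmax_update hn b i β
  have hLHS : 0 ≤ uPPA hn p x γ q v (Function.update b i β) i := by
    unfold uPPA
    rw [hupd, Function.update_self]
    split_ifs with h
    · apply div_nonneg
      · nlinarith [hp.1]
      · linarith
    · exact le_rfl
  rw [ge_iff_le]
  unfold uPPA
  rw [hupd, Function.update_self]
  split_ifs with h1 h2 h2
  · -- both win: M ≤ b i and M ≤ β
    rcases le_or_gt (p * β - p * M) 0 with hnum | hnum
    · have h0 : p * β - p * M = 0 := le_antisymm hnum (by nlinarith [hp.1])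
      rw [h0]
      simp
    · have hMβ : M < β := by
        rcases eq_or_lt_of_le h2 with he | hl
        · exfalso; rw [he] at hnum; linarith
        · exact hl
      rw [T_update_eq_one hn b i β hMβ, div_one]
      exact div_le_self (le_of_lt hnum) hT1
  · -- b wins, truthful loses: M ≤ b i, β < M, so p*β - p*M ≤ 0
    push_neg at h2
    apply div_nonpos_iff.mpr
    right
    constructor
    · nlinarith [hp.1]
    · linarith
  · -- b loses, truthful wins
    apply div_nonneg _ (by linarith)
    nlinarith [hp.1]
  · exact le_rfl


end PPA0
end

section
/- In the PPC second-price auction with fully sophisticated bidders and x > 0, for every bidder i, bidding β = VPA_i/x = (γ_i − q_i + q_i/x)·v_i is a weakly dominant strategy: for every profile of nonnegative bids b, u_i^PPC(b with the i-th coordinate replaced by VPA_i/x) ≥ u_i^PPC(b). (Part of Proposition 1.) -/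
/-!
STATEMENT 4: In the PPC second-price auction with fully sophisticated bidders
and x > 0, bidding β = VPA_i/x = (γ_i − q_i + q_i/x)·v_i is a weakly dominant
strategy.
-/

namespace PPC4

lemma erase_nonempty {n : ℕ} (hn : 2 ≤ n) (i : Fin n) :
    ((Finset.univ : Finset (Fin n)).erase i).Nonempty := by
  apply Finset.card_pos.mp
  rw [Finset.card_erase_of_mem (Finset.mem_univ i), Finset.card_univ, Fintype.card_fin]
  omega

/-- `bmax hn b i` is the highest opponent bid `b_{−i}^max = max_{j ≠ i} b_j`. -/
noncomputable def bmax {n : ℕ} (hn : 2 ≤ n) (b : Fin n → ℝ) (i : Fin n) : ℝ :=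
  ((Finset.univ : Finset (Fin n)).erase i).sup' (erase_nonempty hn i) b

/-- `T b i = #{j : b_j = b_i}`, the number of bidders tied with bidder `i`. -/
noncomputable def T {n : ℕ} (b : Fin n → ℝ) (i : Fin n) : ℝ :=
  (Nat.card {j : Fin n // b j = b i} : ℝ)

/-- Value-per-attention: `VPA_i = [x·γ_i + (1−x)·q_i]·v_i`. -/
def VPA {n : ℕ} (x : ℝ) (γ q v : Fin n → ℝ) (i : Fin n) : ℝ :=
  (x * γ i + (1 - x) * q i) * v i

/-- Bidder `i`'s expected payoff in the PPC second-price auction: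
`(p·VPA_i − p·x·b_{−i}^max)/T(b,i)` if `b_i ≥ b_{−i}^max`, and `0` otherwise. -/
noncomputable def uPPC {n : ℕ} (hn : 2 ≤ n) (p x : ℝ) (γ q v : Fin n → ℝ)
    (b : Fin n → ℝ) (i : Fin n) : ℝ :=
  if bmax hn b i ≤ b i then (p * VPA x γ q v i - p * x * bmax hn b i) / T b i else 0

/-- **Proposition 1 (PPC dominant strategy).** In the PPC second-price auction
with fully sophisticated bidders and `x > 0`, bidding
`VPA_i/x = (γ_i − q_i + q_i/x)·v_i` weakly dominates: for every profile of
nonnegative bids `b`,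
`u_i^PPC(b with i-th coordinate replaced by VPA_i/x) ≥ u_i^PPC(b)`. -/
theorem ppc_dominant (n : ℕ) (hn : 2 ≤ n) (p x : ℝ)
    (hp : 0 ≤ p ∧ p ≤ 1) (hx : 0 < x ∧ x ≤ 1)
    (γ q v : Fin n → ℝ)
    (hγ : ∀ i, 0 ≤ γ i ∧ γ i ≤ 1) (hq : ∀ i, 0 ≤ q i ∧ q i ≤ 1)
    (hv : ∀ i, 0 ≤ v i)
    (i : Fin n) (b : Fin n → ℝ) (hb : ∀ j, 0 ≤ b j) :
    uPPC hn p x γ q v (Function.update b i (VPA x γ q v i / x)) i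
      ≥ uPPC hn p x γ q v b i := by
  obtain ⟨hp0, hp1⟩ := hp
  obtain ⟨hx0, hx1⟩ := hx
  set β := VPA x γ q v i / x with hβ
  set M := bmax hn b i with hMdef
  -- the opponent max is unchanged by updating coordinate i
  have hM' : bmax hn (Function.update b i β) i = M := by
    apply Finset.sup'_congr _ rfl
    intro j hj
    exact Function.update_of_ne (Finset.ne_of_mem_erase hj) _ _
  have hVPA : 0 ≤ VPA x γ q v i := by
    have h1 := (hγ i).1; have h2 := (hq i).1; have h3 := hv i
    have : 0 ≤ x * γ i + (1 - x) * q i := by nlinarith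
    exact mul_nonneg this h3
  have hβ0 : 0 ≤ β := div_nonneg hVPA (le_of_lt hx0)
  have hnum : p * VPA x γ q v i - p * x * M = p * x * (β - M) := by
    rw [hβ]; field_simp
  -- T ≥ 1 always
  have hT : ∀ c : Fin n → ℝ, (1 : ℝ) ≤ T c i := by
    intro c
    unfold T
    have : Nonempty {j : Fin n // c j = c i} := ⟨⟨i, rfl⟩⟩
    have := Nat.card_pos (α := {j : Fin n // c j = c i})
    exact_mod_cast this
  -- opponents' bids are at most M
  have hble : ∀ j : Fin n, j ≠ i → b j ≤ M := by
    intro j hj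
    exact Finset.le_sup' b (Finset.mem_erase.mpr ⟨hj, Finset.mem_univ j⟩)
  -- if β > M then bidder i is the unique winner after deviation
  have hT'1 : M < β → T (Function.update b i β) i = 1 := by
    intro hlt
    unfold T
    have hui : Function.update b i β i = β := Function.update_self _ _ _
    have : Nat.card {j : Fin n // Function.update b i β j = Function.update b i β i} = 1 := by
      rw [Nat.card_eq_one_iff_unique]
      constructor
      · constructor
        intro ⟨j, hj⟩ ⟨k, hk⟩
        have hji : j = i := by
          by_contra h
          rw [Function.update_of_ne h, hui] at hj
          exact absurd hj (ne_of_lt (lt_of_le_of_lt (hble j h) hlt))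
        have hki : k = i := by
          by_contra h
          rw [Function.update_of_ne h, hui] at hk
          exact absurd hk (ne_of_lt (lt_of_le_of_lt (hble k h) hlt))
        simp [hji, hki]
      · exact ⟨⟨i, rfl⟩⟩
    rw [this]; norm_num
  have hupd : Function.update b i β i = β := Function.update_self _ _ _
  unfold uPPC
  rw [hM', hupd]
  by_cases h1 : M ≤ β
  · rw [if_pos h1]
    have hnn : 0 ≤ p * VPA x γ q v i - p * x * M := by
      rw [hnum]
      exact mul_nonneg (mul_nonneg hp0 (le_of_lt hx0)) (by linarith)
    by_cases h2 : M ≤ b i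
    · rw [if_pos h2]
      rcases lt_or_eq_of_le h1 with hlt | heq
      · rw [hT'1 hlt, div_one]
        exact div_le_self hnn (hT b)
      · have : p * VPA x γ q v i - p * x * M = 0 := by rw [hnum, ← heq]; ring
        rw [this, zero_div, zero_div]
    · rw [if_neg h2]
      exact div_nonneg hnn (le_trans zero_le_one (hT _))
  · rw [if_neg h1]
    by_cases h2 : M ≤ b i
    · rw [if_pos h2]
      have hnp : p * VPA x γ q v i - p * x * M ≤ 0 := by
        rw [hnum]
        exact mul_nonpos_of_nonneg_of_nonpos (mul_nonneg hp0 (le_of_lt hx0))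
          (by push_neg at h1; linarith)
      exact div_nonpos_of_nonpos_of_nonneg hnp (le_trans zero_le_one (hT b))
    · rw [if_neg h2]

end PPC4
end

section
/- Assume x > 0 and that there is a unique bidder i* attaining max_{j ∈ I} VPA_j, and let VPA_(2) := max_{j ≠ i*} VPA_j. In the dominant-strategy equilibria b_i^PPA = VPA_i, b_i^PPI = p·VPA_i, and b_i^PPC = VPA_i/x, every bidder receives the same expected payoff across the three formats: bidder i* receives p·(VPA_{i*} − VPA_(2)) in each of the PPA, PPI and PPC auctions, and every bidder j ≠ i* receives 0 in each format. (Payoff-equivalence part of Proposition 1.) -/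
/-!
STATEMENT 6: Payoff-equivalence part of Proposition 1. In the dominant-strategy
equilibria of the PPA, PPI and PPC second-price auctions, bidder i* receives
p·(VPA_{i*} − VPA_(2)) in each format, and every other bidder receives 0.
-/

namespace PPA6

lemma erase_nonempty {n : ℕ} (hn : 2 ≤ n) (i : Fin n) :
    ((Finset.univ : Finset (Fin n)).erase i).Nonempty := by
  apply Finset.card_pos.mp
  rw [Finset.card_erase_of_mem (Finset.mem_univ i), Finset.card_univ, Fintype.card_fin]
  omega

/-- `bmax hn b i = max_{j ≠ i} b_j`. -/
noncomputable def bmax {n : ℕ} (hn : 2 ≤ n) (b : Fin n → ℝ) (i : Fin n) : ℝ :=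
  ((Finset.univ : Finset (Fin n)).erase i).sup' (erase_nonempty hn i) b

/-- `T b i = #{j : b_j = b_i}`. -/
noncomputable def T {n : ℕ} (b : Fin n → ℝ) (i : Fin n) : ℝ :=
  (Nat.card {j : Fin n // b j = b i} : ℝ)

/-- Value-per-attention: `VPA_i = [x·γ_i + (1−x)·q_i]·v_i`. -/
def VPA {n : ℕ} (x : ℝ) (γ q v : Fin n → ℝ) (i : Fin n) : ℝ :=
  (x * γ i + (1 - x) * q i) * v i

/-- PPA payoff: `(p·VPA_i − p·b_{−i}^max)/T(b,i)` if `b_i ≥ b_{−i}^max`, else `0`. -/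
noncomputable def uPPA {n : ℕ} (hn : 2 ≤ n) (p x : ℝ) (γ q v : Fin n → ℝ)
    (b : Fin n → ℝ) (i : Fin n) : ℝ :=
  if bmax hn b i ≤ b i then (p * VPA x γ q v i - p * bmax hn b i) / T b i else 0

/-- PPI payoff: `(p·VPA_i − b_{−i}^max)/T(b,i)` if `b_i ≥ b_{−i}^max`, else `0`. -/
noncomputable def uPPI {n : ℕ} (hn : 2 ≤ n) (p x : ℝ) (γ q v : Fin n → ℝ)
    (b : Fin n → ℝ) (i : Fin n) : ℝ :=
  if bmax hn b i ≤ b i then (p * VPA x γ q v i - bmax hn b i) / T b i else 0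

/-- PPC payoff: `(p·VPA_i − p·x·b_{−i}^max)/T(b,i)` if `b_i ≥ b_{−i}^max`, else `0`. -/
noncomputable def uPPC {n : ℕ} (hn : 2 ≤ n) (p x : ℝ) (γ q v : Fin n → ℝ)
    (b : Fin n → ℝ) (i : Fin n) : ℝ :=
  if bmax hn b i ≤ b i then (p * VPA x γ q v i - p * x * bmax hn b i) / T b i else 0

lemma bmax_smul {n : ℕ} (hn : 2 ≤ n) (c : ℝ) (hc : 0 ≤ c) (b : Fin n → ℝ) (i : Fin n) :
    bmax hn (fun j => c * b j) i = c * bmax hn b i := by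
  unfold bmax
  apply le_antisymm
  · apply Finset.sup'_le
    intro j hj
    exact mul_le_mul_of_nonneg_left (Finset.le_sup' b hj) hc
  · rcases eq_or_lt_of_le hc with h | h
    · subst h
      simp
    · rw [mul_comm, ← le_div_iff₀ h]
      apply Finset.sup'_le
      intro j hj
      rw [le_div_iff₀ h, mul_comm]
      exact Finset.le_sup' (fun j => c * b j) hj

lemma bmax_lt {n : ℕ} (hn : 2 ≤ n) (b : Fin n → ℝ) (i : Fin n)
    (h : ∀ j, j ≠ i → b j < b i) : bmax hn b i < b i := by
  unfold bmax
  rw [Finset.sup'_lt_iff]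
  intro j hj
  exact h j (Finset.ne_of_mem_erase hj)

lemma le_bmax {n : ℕ} (hn : 2 ≤ n) (b : Fin n → ℝ) {i j : Fin n} (h : i ≠ j) :
    b i ≤ bmax hn b j :=
  Finset.le_sup' b (Finset.mem_erase.mpr ⟨h, Finset.mem_univ i⟩)

lemma T_eq_one {n : ℕ} (b : Fin n → ℝ) (i : Fin n)
    (h : ∀ j, j ≠ i → b j ≠ b i) : T b i = 1 := by
  unfold T
  norm_cast
  rw [Nat.card_eq_one_iff_unique]
  refine ⟨⟨fun a c => ?_⟩, ⟨⟨i, rfl⟩⟩⟩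
  obtain ⟨aj, ha⟩ := a
  obtain ⟨cj, hc⟩ := c
  have haj : aj = i := by
    by_contra haj
    exact h aj haj ha
  have hcj : cj = i := by
    by_contra hcj
    exact h cj hcj hc
  simp [haj, hcj]

/-- **Proposition 1 (payoff equivalence).** Assume `x > 0` and let `i*` be the
unique bidder attaining `max_j VPA_j`, with `VPA_(2) = max_{j ≠ i*} VPA_j`.
In the dominant-strategy equilibria `b_i^PPA = VPA_i`, `b_i^PPI = p·VPA_i` and
`b_i^PPC = VPA_i/x`, every bidder receives the same expected payoff in the
three formats: `i*` receives `p·(VPA_{i*} − VPA_(2))` in each of the PPA, PPI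
and PPC auctions, and every bidder `j ≠ i*` receives `0` in each format. -/
theorem payoff_equivalence (n : ℕ) (hn : 2 ≤ n) (p x : ℝ)
    (hp : 0 ≤ p ∧ p ≤ 1) (hx : 0 < x ∧ x ≤ 1)
    (γ q v : Fin n → ℝ)
    (hγ : ∀ i, 0 ≤ γ i ∧ γ i ≤ 1) (hq : ∀ i, 0 ≤ q i ∧ q i ≤ 1)
    (hv : ∀ i, 0 ≤ v i)
    (istar : Fin n)
    (hmax : ∀ j, VPA x γ q v j ≤ VPA x γ q v istar)
    (huniq : ∀ j, j ≠ istar → VPA x γ q v j < VPA x γ q v istar) :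
    uPPA hn p x γ q v (fun j => VPA x γ q v j) istar
      = p * (VPA x γ q v istar - bmax hn (VPA x γ q v) istar) ∧
    uPPI hn p x γ q v (fun j => p * VPA x γ q v j) istar
      = p * (VPA x γ q v istar - bmax hn (VPA x γ q v) istar) ∧
    uPPC hn p x γ q v (fun j => VPA x γ q v j / x) istar
      = p * (VPA x γ q v istar - bmax hn (VPA x γ q v) istar) ∧
    (∀ j, j ≠ istar →
      uPPA hn p x γ q v (fun j' => VPA x γ q v j') j = 0 ∧
      uPPI hn p x γ q v (fun j' => p * VPA x γ q v j') j = 0 ∧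
      uPPC hn p x γ q v (fun j' => VPA x γ q v j' / x) j = 0)  := by
  obtain ⟨hx0, hx1⟩ := hx
  set B := VPA x γ q v with hB
  have hbm : bmax hn B istar < B istar := bmax_lt hn B istar huniq
  have hT1 : T B istar = 1 := T_eq_one B istar (fun j hj => ne_of_lt (huniq j hj))
  have hdiv : ∀ (f : Fin n → ℝ), (fun j => f j / x) = fun j => x⁻¹ * f j := by
    intro f; funext j; rw [div_eq_inv_mul]
  have hmonoC : ∀ j, j ≠ istar → B j / x < B istar / x := by
    intro j hj
    exact div_lt_div_of_pos_right (huniq j hj) hx0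
  refine ⟨?_, ?_, ?_, ?_⟩
  · rw [uPPA, if_pos hbm.le]
    show (p * B istar - p * bmax hn B istar) / T B istar = _
    rw [hT1]; ring
  · rcases eq_or_lt_of_le hp.1 with hp0 | hp0
    · rw [uPPI, ← hp0]
      simp only [zero_mul, sub_zero]
      have h0 : bmax hn (fun _ : Fin n => (0:ℝ)) istar = 0 := by
        unfold bmax; simp
      simp [h0]
    · have hmono : ∀ j, j ≠ istar → p * B j < p * B istar :=
        fun j hj => mul_lt_mul_of_pos_left (huniq j hj) hp0
      have hbm' : bmax hn (fun j => p * B j) istar < p * B istar :=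
        bmax_lt hn _ istar hmono
      have hT1' : T (fun j => p * B j) istar = 1 :=
        T_eq_one _ istar (fun j hj => ne_of_lt (hmono j hj))
      rw [uPPI, if_pos hbm'.le, hT1', bmax_smul hn p hp.1 B istar]
      ring
  · have hbm' : bmax hn (fun j => B j / x) istar < B istar / x :=
      bmax_lt hn _ istar hmonoC
    have hT1' : T (fun j => B j / x) istar = 1 :=
      T_eq_one _ istar (fun j hj => ne_of_lt (hmonoC j hj))
    have hbmC : bmax hn (fun j => B j / x) istar = x⁻¹ * bmax hn B istar := by
      rw [hdiv, bmax_smul hn _ (by positivity) B istar]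
    rw [uPPC, if_pos hbm'.le, hT1', hbmC]
    field_simp
    ring
  · intro j hj
    have h1 : B j < bmax hn B j :=
      lt_of_lt_of_le (huniq j hj) (le_bmax hn B (Ne.symm hj))
    refine ⟨?_, ?_, ?_⟩
    · rw [uPPA, if_neg (not_le.mpr h1)]
    · rcases eq_or_lt_of_le hp.1 with hp0 | hp0
      · rw [uPPI, ← hp0]
        simp only [zero_mul]
        have h0 : bmax hn (fun _ : Fin n => (0:ℝ)) j = 0 := by
          unfold bmax; simp
        simp [h0]
      · have h2 : p * B j < bmax hn (fun j' => p * B j') j := by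
          calc p * B j < p * B istar := mul_lt_mul_of_pos_left (huniq j hj) hp0
          _ ≤ _ := le_bmax hn (b := fun j' => p * B j') (Ne.symm hj)
        rw [uPPI, if_neg (not_le.mpr h2)]
    · have h2 : B j / x < bmax hn (fun j' => B j' / x) j :=
        lt_of_lt_of_le (hmonoC j hj) (le_bmax hn (b := fun j' => B j' / x) (Ne.symm hj))
      rw [uPPC, if_neg (not_le.mpr h2)]

end PPA6
end

section
/- With bidder-specific attention probabilities p_i ∈ [0,1] and x > 0, for every bidder i: (a) bidding β = p_i·VPA_i is a weakly dominant strategy under the PPI payoff u_i^PPI; (b) bidding β = VPA_i/x is a weakly dominant strategy under the PPC payoff u_i^PPC; and (c) bidding β = VPA_i is a weakly dominant strategy under the PPA payoff u_i^PPA. (Dominant strategies asserted in the proof of Proposition 2.) -/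
/-!
STATEMENT 7: With bidder-specific attention probabilities p_i, the dominant
strategies are b_i^PPI = p_i·VPA_i, b_i^PPC = VPA_i/x, and b_i^PPA = VPA_i
(dominant strategies asserted in the proof of Proposition 2).
-/

namespace PPA7

lemma erase_nonempty {n : ℕ} (hn : 2 ≤ n) (i : Fin n) :
    ((Finset.univ : Finset (Fin n)).erase i).Nonempty := by
  apply Finset.card_pos.mp
  rw [Finset.card_erase_of_mem (Finset.mem_univ i), Finset.card_univ, Fintype.card_fin]
  omega

/-- `bmax hn b i = max_{j ≠ i} b_j`. -/
noncomputable def bmax {n : ℕ} (hn : 2 ≤ n) (b : Fin n → ℝ) (i : Fin n) : ℝ :=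
  ((Finset.univ : Finset (Fin n)).erase i).sup' (erase_nonempty hn i) b

/-- `T b i = #{j : b_j = b_i}`. -/
noncomputable def T {n : ℕ} (b : Fin n → ℝ) (i : Fin n) : ℝ :=
  (Nat.card {j : Fin n // b j = b i} : ℝ)

/-- Value-per-attention: `VPA_i = [x·γ_i + (1−x)·q_i]·v_i`. -/
def VPA {n : ℕ} (x : ℝ) (γ q v : Fin n → ℝ) (i : Fin n) : ℝ :=
  (x * γ i + (1 - x) * q i) * v i

/-- PPA payoff with bidder-specific attention probabilities:
`(p_i·VPA_i − p_i·b_{−i}^max)/T(b,i)` if `b_i ≥ b_{−i}^max`, else `0`. -/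
noncomputable def uPPA {n : ℕ} (hn : 2 ≤ n) (p : Fin n → ℝ) (x : ℝ)
    (γ q v : Fin n → ℝ) (b : Fin n → ℝ) (i : Fin n) : ℝ :=
  if bmax hn b i ≤ b i then (p i * VPA x γ q v i - p i * bmax hn b i) / T b i else 0

/-- PPI payoff with bidder-specific attention probabilities:
`(p_i·VPA_i − b_{−i}^max)/T(b,i)` if `b_i ≥ b_{−i}^max`, else `0`. -/
noncomputable def uPPI {n : ℕ} (hn : 2 ≤ n) (p : Fin n → ℝ) (x : ℝ)
    (γ q v : Fin n → ℝ) (b : Fin n → ℝ) (i : Fin n) : ℝ :=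
  if bmax hn b i ≤ b i then (p i * VPA x γ q v i - bmax hn b i) / T b i else 0

/-- PPC payoff with bidder-specific attention probabilities:
`(p_i·VPA_i − p_i·x·b_{−i}^max)/T(b,i)` if `b_i ≥ b_{−i}^max`, else `0`. -/
noncomputable def uPPC {n : ℕ} (hn : 2 ≤ n) (p : Fin n → ℝ) (x : ℝ)
    (γ q v : Fin n → ℝ) (b : Fin n → ℝ) (i : Fin n) : ℝ :=
  if bmax hn b i ≤ b i then (p i * VPA x γ q v i - p i * x * bmax hn b i) / T b i else 0

lemma bmax_update {n : ℕ} (hn : 2 ≤ n) (b : Fin n → ℝ) (i : Fin n) (β : ℝ) :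
    bmax hn (Function.update b i β) i = bmax hn b i := by
  unfold bmax
  apply Finset.sup'_congr _ rfl
  intro j hj
  exact Function.update_of_ne (Finset.ne_of_mem_erase hj) _ _

lemma le_bmax {n : ℕ} (hn : 2 ≤ n) (b : Fin n → ℝ) {i j : Fin n} (h : j ≠ i) :
    b j ≤ bmax hn b i :=
  Finset.le_sup' b (Finset.mem_erase.mpr ⟨h, Finset.mem_univ j⟩)

lemma T_pos {n : ℕ} (b : Fin n → ℝ) (i : Fin n) : 1 ≤ T b i := by
  unfold T
  haveI : Nonempty {j : Fin n // b j = b i} := ⟨⟨i, rfl⟩⟩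
  exact_mod_cast Nat.one_le_iff_ne_zero.mpr Nat.card_pos.ne'

lemma key {n : ℕ} (hn : 2 ≤ n) (b : Fin n → ℝ) (i : Fin n) (k β c : ℝ)
    (hk : 0 ≤ k) (hc : c = k * β) :
    (if bmax hn (Function.update b i β) i ≤ Function.update b i β i then
        (c - k * bmax hn (Function.update b i β) i) / T (Function.update b i β) i else 0)
      ≥ (if bmax hn b i ≤ b i then (c - k * bmax hn b i) / T b i else 0) := by
  rw [bmax_update, Function.update_self]
  set M := bmax hn b i with hM
  have hT := T_pos b i
  have hT' := T_pos (Function.update b i β) i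
  have lhs_nonneg : (0:ℝ) ≤ if M ≤ β then (c - k * M) / T (Function.update b i β) i else 0 := by
    split
    · apply div_nonneg
      · rename_i h
        rw [hc]
        nlinarith
      · linarith
    · exact le_refl 0
  by_cases h : M ≤ b i
  · rw [if_pos h]
    by_cases hnum : c - k * M ≤ 0
    · calc (c - k * M) / T b i ≤ 0 := div_nonpos_of_nonpos_of_nonneg hnum (by linarith)
        _ ≤ _ := lhs_nonneg
    · push_neg at hnum
      have hkpos : 0 < k := by
        rcases hk.lt_or_eq with h' | h'
        · exact h'
        · exfalso; rw [hc, ← h'] at hnum; simp at hnum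
      have hMβ : M < β := by
        rw [hc] at hnum
        nlinarith
      rw [if_pos hMβ.le]
      have hT1 : T (Function.update b i β) i = 1 := by
        unfold T
        haveI : Unique {j : Fin n // Function.update b i β j = β} := by
          refine ⟨⟨⟨i, Function.update_self i β b⟩⟩, ?_⟩
          rintro ⟨j, hj⟩
          apply Subtype.ext
          show j = i
          by_contra hji
          rw [Function.update_of_ne hji] at hj
          have := le_bmax hn b hji
          rw [hj] at this
          exact absurd this (not_le.mpr hMβ)
        simp [Nat.card_unique]
      rw [hT1, div_one]
      calc (c - k * M) / T b i ≤ (c - k * M) := div_le_self hnum.le hT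
        _ ≤ c - k * M := le_refl _
  · rw [if_neg h]
    exact lhs_nonneg

/-- **Proposition 2 (dominant strategies).** With bidder-specific attention
probabilities `p_i ∈ [0,1]` and `x > 0`, for every bidder `i`:
(a) bidding `p_i·VPA_i` is weakly dominant under the PPI payoff;
(b) bidding `VPA_i/x` is weakly dominant under the PPC payoff;
(c) bidding `VPA_i` is weakly dominant under the PPA payoff. -/
theorem bidder_specific_dominant (n : ℕ) (hn : 2 ≤ n)
    (p : Fin n → ℝ) (hp : ∀ i, 0 ≤ p i ∧ p i ≤ 1)
    (x : ℝ) (hx : 0 < x ∧ x ≤ 1)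
    (γ q v : Fin n → ℝ)
    (hγ : ∀ i, 0 ≤ γ i ∧ γ i ≤ 1) (hq : ∀ i, 0 ≤ q i ∧ q i ≤ 1)
    (hv : ∀ i, 0 ≤ v i)
    (i : Fin n) :
    (∀ b : Fin n → ℝ, (∀ j, 0 ≤ b j) →
      uPPI hn p x γ q v (Function.update b i (p i * VPA x γ q v i)) i
        ≥ uPPI hn p x γ q v b i) ∧
    (∀ b : Fin n → ℝ, (∀ j, 0 ≤ b j) →
      uPPC hn p x γ q v (Function.update b i (VPA x γ q v i / x)) i
        ≥ uPPC hn p x γ q v b i) ∧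
    (∀ b : Fin n → ℝ, (∀ j, 0 ≤ b j) →
      uPPA hn p x γ q v (Function.update b i (VPA x γ q v i)) i
        ≥ uPPA hn p x γ q v b i) := by
  obtain ⟨hx0, hx1⟩ := hx
  refine ⟨?_, ?_, ?_⟩
  · intro b _
    unfold uPPI
    have := key hn b i 1 (p i * VPA x γ q v i) (p i * VPA x γ q v i)
      zero_le_one (by ring)
    simpa [one_mul] using this
  · intro b _
    unfold uPPC
    exact key hn b i (p i * x) (VPA x γ q v i / x) (p i * VPA x γ q v i)
      (mul_nonneg (hp i).1 hx0.le) (by field_simp)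
  · intro b _
    unfold uPPA
    exact key hn b i (p i) (VPA x γ q v i) (p i * VPA x γ q v i) (hp i).1 rfl

end PPA7
end

section
/- With bidder-specific attention probabilities p_i and x > 0, suppose there is a unique bidder i* attaining max_{j ∈ I} VPA_j and a unique bidder ĩ attaining max_{j ∈ I} VPI_j where VPI_j := p_j·VPA_j. In the dominant-strategy equilibria b_i^PPA = VPA_i, b_i^PPC = VPA_i/x, and b_i^PPI = p_i·VPA_i, the expected revenues are R^PPA = R^PPC = p_{i*}·(max_{j ≠ i*} VPA_j) and R^PPI = max_{j ≠ ĩ} (p_j·VPA_j). (Proposition 2.) -/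
/-!
STATEMENT 8: Proposition 2. With bidder-specific attention probabilities, in the
dominant-strategy equilibria the expected revenues are
R^PPA = R^PPC = p_{i*}·(max_{j≠i*} VPA_j) and R^PPI = max_{j≠ĩ}(p_j·VPA_j).
-/

namespace PPA8

lemma erase_nonempty {n : ℕ} (hn : 2 ≤ n) (i : Fin n) :
    ((Finset.univ : Finset (Fin n)).erase i).Nonempty := by
  apply Finset.card_pos.mp
  rw [Finset.card_erase_of_mem (Finset.mem_univ i), Finset.card_univ, Fintype.card_fin]
  omega

/-- `bmax hn b i = max_{j ≠ i} b_j` : for a winner `w`, this is the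
second-highest bid of the profile `b`. -/
noncomputable def bmax {n : ℕ} (hn : 2 ≤ n) (b : Fin n → ℝ) (i : Fin n) : ℝ :=
  ((Finset.univ : Finset (Fin n)).erase i).sup' (erase_nonempty hn i) b

/-- Value-per-attention: `VPA_i = [x·γ_i + (1−x)·q_i]·v_i`. -/
def VPA {n : ℕ} (x : ℝ) (γ q v : Fin n → ℝ) (i : Fin n) : ℝ :=
  (x * γ i + (1 - x) * q i) * v i


lemma sup'_div {α : Type*} {s : Finset α} (h : s.Nonempty) (f : α → ℝ) {x : ℝ}
    (hx : 0 < x) : s.sup' h (fun j => f j / x) = s.sup' h f / x := by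
  apply le_antisymm
  · apply Finset.sup'_le
    intro j hj
    exact div_le_div_of_nonneg_right (Finset.le_sup' f hj) hx.le
  · obtain ⟨j, hj, hje⟩ := Finset.exists_mem_eq_sup' h f
    rw [hje]
    exact Finset.le_sup' (fun j => f j / x) hj

/-- **Proposition 2.** With bidder-specific attention probabilities `p_i` and
`x > 0`, suppose `i*` is the unique bidder attaining `max_j VPA_j` and `ĩ` the
unique bidder attaining `max_j VPI_j` where `VPI_j = p_j·VPA_j`. In the
dominant-strategy equilibria `b^PPA = VPA`, `b^PPC = VPA/x`, `b^PPI = p·VPA`,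
the expected revenue (winning probability times the second-highest bid, for any
highest bidder `w` of the respective profile) satisfies
`R^PPA = R^PPC = p_{i*}·(max_{j≠i*} VPA_j)` and `R^PPI = max_{j≠ĩ}(p_j·VPA_j)`. -/
theorem bidder_specific_revenues (n : ℕ) (hn : 2 ≤ n)
    (p : Fin n → ℝ) (hp : ∀ i, 0 ≤ p i ∧ p i ≤ 1)
    (x : ℝ) (hx : 0 < x ∧ x ≤ 1)
    (γ q v : Fin n → ℝ)
    (hγ : ∀ i, 0 ≤ γ i ∧ γ i ≤ 1) (hq : ∀ i, 0 ≤ q i ∧ q i ≤ 1)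
    (hv : ∀ i, 0 ≤ v i)
    (istar itil : Fin n)
    (hstarmax : ∀ j, VPA x γ q v j ≤ VPA x γ q v istar)
    (hstaruniq : ∀ j, j ≠ istar → VPA x γ q v j < VPA x γ q v istar)
    (htilmax : ∀ j, p j * VPA x γ q v j ≤ p itil * VPA x γ q v itil)
    (htiluniq : ∀ j, j ≠ itil → p j * VPA x γ q v j < p itil * VPA x γ q v itil) :
    -- R^PPA = p_{i*}·(max_{j ≠ i*} VPA_j)
    (∀ w, (∀ j, VPA x γ q v j ≤ VPA x γ q v w) →
      p w * bmax hn (VPA x γ q v) w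
        = p istar * bmax hn (VPA x γ q v) istar) ∧
    -- R^PPC = p_{i*}·(max_{j ≠ i*} VPA_j)
    (∀ w, (∀ j, VPA x γ q v j / x ≤ VPA x γ q v w / x) →
      p w * x * bmax hn (fun j => VPA x γ q v j / x) w
        = p istar * bmax hn (VPA x γ q v) istar) ∧
    -- R^PPI = max_{j ≠ ĩ} (p_j·VPA_j)
    (∀ w, (∀ j, p j * VPA x γ q v j ≤ p w * VPA x γ q v w) →
      bmax hn (fun j => p j * VPA x γ q v j) w
        = bmax hn (fun j => p j * VPA x γ q v j) itil) := by
  obtain ⟨hx0, hx1⟩ := hx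
  have uniqA : ∀ w, (∀ j, VPA x γ q v j ≤ VPA x γ q v w) → w = istar := by
    intro w hw
    by_contra hne
    exact absurd (hw istar) (not_le.mpr (hstaruniq w hne))
  have uniqI : ∀ w, (∀ j, p j * VPA x γ q v j ≤ p w * VPA x γ q v w) → w = itil := by
    intro w hw
    by_contra hne
    exact absurd (hw itil) (not_le.mpr (htiluniq w hne))
  refine ⟨?_, ?_, ?_⟩
  · intro w hw
    rw [uniqA w hw]
  · intro w hw
    have hw' : ∀ j, VPA x γ q v j ≤ VPA x γ q v w := by
      intro j
      exact (div_le_div_iff_of_pos_right hx0).mp (hw j)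
    rw [uniqA w hw']
    unfold bmax
    rw [sup'_div _ _ hx0]
    field_simp
  · intro w hw
    rw [uniqI w hw]


end PPA8
end

section
/- With framed bidders, let i₁ be the unique bidder attaining max_j VPA_j with second-highest value VPA_(2) := max_{j ≠ i₁} VPA_j, let ī₁ be the unique bidder attaining max_j VPC_j, and let ī₂ attain max_{j ≠ ī₁} VPC_j, so that R̂^PPA = p_{i₁}·VPA_(2) and R̂^PPC = p_{ī₁}·x·VPC_{ī₂}. If p_{i₁} ≥ p_{ī₁} > 0, x < 1, q_{ī₂} > 0, v_{ī₂} > 0, and VPA_{ī₂} ≠ max_j VPA_j, then R̂^PPA > R̂^PPC, i.e., p_{i₁}·VPA_(2) > p_{ī₁}·x·γ_{ī₂}·v_{ī₂}. (Proposition 3, part (ii).) -/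
/-!
STATEMENT 12: Proposition 3, part (ii). With framed bidders, if
p_{i₁} ≥ p_{ī₁} > 0, x < 1, q_{ī₂} > 0, v_{ī₂} > 0 and VPA_{ī₂} ≠ max_j VPA_j,
then R̂^PPA > R̂^PPC, i.e. p_{i₁}·VPA_(2) > p_{ī₁}·x·γ_{ī₂}·v_{ī₂}.
-/

namespace PPA12

lemma erase_nonempty {n : ℕ} (hn : 2 ≤ n) (i : Fin n) :
    ((Finset.univ : Finset (Fin n)).erase i).Nonempty := by
  apply Finset.card_pos.mp
  rw [Finset.card_erase_of_mem (Finset.mem_univ i), Finset.card_univ, Fintype.card_fin]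
  omega

/-- `bmax hn b i = max_{j ≠ i} b_j`. -/
noncomputable def bmax {n : ℕ} (hn : 2 ≤ n) (b : Fin n → ℝ) (i : Fin n) : ℝ :=
  ((Finset.univ : Finset (Fin n)).erase i).sup' (erase_nonempty hn i) b

/-- Value-per-click: `VPC_i = γ_i·v_i`. -/
def VPC {n : ℕ} (γ v : Fin n → ℝ) (i : Fin n) : ℝ := γ i * v i

/-- Value-per-attention: `VPA_i = [x·γ_i + (1−x)·q_i]·v_i`. -/
def VPA {n : ℕ} (x : ℝ) (γ q v : Fin n → ℝ) (i : Fin n) : ℝ :=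
  (x * γ i + (1 - x) * q i) * v i

/-- **Proposition 3(ii).** Let `i₁` be the unique bidder attaining `max_j VPA_j`
(with second-highest value `VPA_(2) = max_{j≠i₁} VPA_j`), `ī₁` the unique bidder
attaining `max_j VPC_j`, and `ī₂ ≠ ī₁` a bidder attaining `max_{j≠ī₁} VPC_j`, so
that `R̂^PPA = p_{i₁}·VPA_(2)` and `R̂^PPC = p_{ī₁}·x·VPC_{ī₂}`. If
`p_{i₁} ≥ p_{ī₁} > 0`, `x < 1`, `q_{ī₂} > 0`, `v_{ī₂} > 0`, and
`VPA_{ī₂} ≠ max_j VPA_j`, then `R̂^PPA > R̂^PPC`, i.e.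
`p_{i₁}·VPA_(2) > p_{ī₁}·x·γ_{ī₂}·v_{ī₂}`. -/
theorem framed_ppa_vs_ppc (n : ℕ) (hn : 2 ≤ n)
    (p : Fin n → ℝ) (hp : ∀ i, 0 ≤ p i ∧ p i ≤ 1)
    (x : ℝ) (hx : 0 < x ∧ x ≤ 1)
    (γ q v : Fin n → ℝ)
    (hγ : ∀ i, 0 ≤ γ i ∧ γ i ≤ 1) (hq : ∀ i, 0 ≤ q i ∧ q i ≤ 1)
    (hv : ∀ i, 0 ≤ v i)
    (i1 ibar1 ibar2 : Fin n)
    (hi1max : ∀ j, VPA x γ q v j ≤ VPA x γ q v i1)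
    (hi1uniq : ∀ j, j ≠ i1 → VPA x γ q v j < VPA x γ q v i1)
    (hibar1max : ∀ j, VPC γ v j ≤ VPC γ v ibar1)
    (hibar1uniq : ∀ j, j ≠ ibar1 → VPC γ v j < VPC γ v ibar1)
    (hibar2ne : ibar2 ≠ ibar1)
    (hibar2max : ∀ j, j ≠ ibar1 → VPC γ v j ≤ VPC γ v ibar2)
    (hpp : p ibar1 ≤ p i1) (hpbar : 0 < p ibar1)
    (hx1 : x < 1) (hq2 : 0 < q ibar2) (hv2 : 0 < v ibar2)
    (hne : VPA x γ q v ibar2 ≠ VPA x γ q v i1) :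
    p i1 * bmax hn (VPA x γ q v) i1 > p ibar1 * x * (γ ibar2 * v ibar2) := by
  have hne2 : ibar2 ≠ i1 := fun h => hne (by rw [h])
  have hmem : ibar2 ∈ (Finset.univ : Finset (Fin n)).erase i1 :=
    Finset.mem_erase.mpr ⟨hne2, Finset.mem_univ _⟩
  have hb : VPA x γ q v ibar2 ≤ bmax hn (VPA x γ q v) i1 :=
    Finset.le_sup' _ hmem
  have hkey : x * (γ ibar2 * v ibar2) < VPA x γ q v ibar2 := by
    have : 0 < (1 - x) * q ibar2 * v ibar2 := by
      apply mul_pos (mul_pos (by linarith) hq2) hv2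
    unfold VPA; nlinarith
  have hbpos : 0 < bmax hn (VPA x γ q v) i1 := by
    have : 0 < x * (γ ibar2 * v ibar2) ∨ True := Or.inr trivial
    nlinarith [mul_nonneg (mul_nonneg hx.1.le (hγ ibar2).1) hv2.le]
  calc p ibar1 * x * (γ ibar2 * v ibar2)
      = p ibar1 * (x * (γ ibar2 * v ibar2)) := by ring
    _ < p ibar1 * bmax hn (VPA x γ q v) i1 := by
        apply mul_lt_mul_of_pos_left _ hpbar; linarith
    _ ≤ p i1 * bmax hn (VPA x γ q v) i1 :=
        mul_le_mul_of_nonneg_right hpp hbpos.le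

end PPA12
end
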